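/- Let μ > 0, δ ∈ (0,1/2], and C^{(δ)} = ∫_ℝ |η|·e^{−8π²δ²η²} / (2(4π²η² + μ)) dη. Set α = −(γ_EM + log 2)/(8π²), where γ_EM is the Euler–Mascheroni constant. Then there exists a universal constant C > 0 such that for all μ > 0 and δ ∈ (0,1/2] with μδ² ≤ 1, one has |C^{(δ)} − log(1/δ)/(4π²) − α + (log μ)/(8π²)| ≤ C·μδ²·(1 + log(1/(μδ²))). -/

import Mathlib

open MeasureTheory

/-- The logarithmically divergent renormalization constant `C^{(δ)}`. -/
noncomputable def Cdelta (μ δ : ℝ) : ℝ :=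
  ∫ η : ℝ, |η| * Real.exp (-8 * Real.pi ^ 2 * δ ^ 2 * η ^ 2) /
    (2 * (4 * Real.pi ^ 2 * η ^ 2 + μ))

section Aux
open Set Real Filter

lemma gamma_int : ∫ t in Ioi (0:ℝ), Real.exp (-t) * Real.log t = -Real.eulerMascheroniConstant := by
  have h1 : HasDerivAt Complex.GammaIntegral
      (∫ t : ℝ in Ioi 0, (t:ℂ) ^ ((1:ℂ) - 1) * (Real.log t * Real.exp (-t))) 1 :=
    Complex.hasDerivAt_GammaIntegral (by norm_num)
  have h2 : (∫ t : ℝ in Ioi 0, (t:ℂ) ^ ((1:ℂ) - 1) * (Real.log t * Real.exp (-t)))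
      = ((∫ t : ℝ in Ioi 0, Real.exp (-t) * Real.log t : ℝ) : ℂ) := by
    have e : (fun t : ℝ => (t:ℂ) ^ ((1:ℂ) - 1) * (Real.log t * Real.exp (-t)))
        = fun t : ℝ => ((Real.exp (-t) * Real.log t : ℝ) : ℂ) := by
      funext t
      rw [sub_self, Complex.cpow_zero]
      push_cast
      ring
    rw [e]; exact integral_ofReal
  rw [h2] at h1
  -- Gamma = GammaIntegral near 1
  have h3 : HasDerivAt Complex.Gamma
      (((∫ t : ℝ in Ioi 0, Real.exp (-t) * Real.log t : ℝ) : ℂ)) 1 := by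
    apply h1.congr_of_eventuallyEq
    have : {s : ℂ | 0 < s.re} ∈ nhds (1:ℂ) := by
      apply IsOpen.mem_nhds
      · exact isOpen_lt continuous_const Complex.continuous_re
      · simp
    filter_upwards [this] with s hs
    exact Complex.Gamma_eq_integral hs
  -- real part
  have h4 : HasDerivAt (fun x : ℝ => Real.Gamma x)
      (∫ t : ℝ in Ioi 0, Real.exp (-t) * Real.log t) 1 := by
    have := h3.real_of_complex
    simpa [Complex.Gamma_ofReal] using this
  have h5 := Real.hasDerivAt_Gamma_one
  have := h4.unique h5
  linarith

lemma abs_log_le (t : ℝ) (ht : 0 < t) (ht2 : t ≤ 2) : |Real.log t| ≤ 2 * t ^ (-(1:ℝ)/2) := by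
  have hs : 0 < Real.sqrt t := Real.sqrt_pos.mpr ht
  have hrp : t ^ (-(1:ℝ)/2) = (Real.sqrt t)⁻¹ := by
    rw [Real.sqrt_eq_rpow, ← Real.rpow_neg ht.le]
    norm_num
  rw [hrp]
  rcases le_or_gt t 1 with h1 | h1
  · rw [abs_of_nonpos (Real.log_nonpos ht.le h1)]
    have hlg : Real.log t = 2 * Real.log (Real.sqrt t) := by
      rw [Real.log_sqrt ht.le]; ring
    rw [hlg]
    have h2 : Real.log (Real.sqrt t) ≥ -(Real.sqrt t)⁻¹ := by
      have := Real.log_le_sub_one_of_pos (x := (Real.sqrt t)⁻¹) (by positivity)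
      rw [Real.log_inv] at this
      nlinarith [inv_pos.mpr hs]
    nlinarith
  · rw [abs_of_nonneg (Real.log_nonneg h1.le)]
    have h2 : Real.log t ≤ 1 := by
      calc Real.log t ≤ t - 1 := Real.log_le_sub_one_of_pos ht
      _ ≤ 1 := by linarith
    have h3 : Real.sqrt t ≤ 2 := by
      rw [show (2:ℝ) = Real.sqrt 4 by rw [show (4:ℝ) = 2^2 by norm_num, Real.sqrt_sq]; norm_num]
      exact Real.sqrt_le_sqrt (by linarith)
    have : (2:ℝ)⁻¹ ≤ (Real.sqrt t)⁻¹ := by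
      apply inv_anti₀ hs h3
    linarith [mul_le_mul_of_nonneg_left this (by norm_num : (0:ℝ) ≤ 2)]

lemma log_integrableOn (x : ℝ) (hx : 0 < x) (hx2 : x ≤ 2) :
    IntegrableOn Real.log (Ioc 0 x) := by
  have hmono : IntegrableOn (fun t : ℝ => 2 * t ^ (-(1:ℝ)/2)) (Ioc 0 x) := by
    have : IntegrableOn (fun t : ℝ => t ^ (-(1:ℝ)/2)) (Ioo 0 x) := by
      rw [intervalIntegral.integrableOn_Ioo_rpow_iff hx]; norm_num
    rw [integrableOn_Ioc_iff_integrableOn_Ioo]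
    exact this.const_mul 2
  refine Integrable.mono hmono ?_ ?_
  · exact (Real.measurable_log.aestronglyMeasurable).restrict
  · filter_upwards [ae_restrict_mem measurableSet_Ioc] with t ht
    rw [Real.norm_eq_abs, Real.norm_eq_abs]
    have := abs_log_le t ht.1 (ht.2.trans hx2)
    calc |Real.log t| ≤ 2 * t ^ (-(1:ℝ)/2) := this
    _ ≤ |2 * t ^ (-(1:ℝ)/2)| := le_abs_self _

lemma integral_log_Ioc (x : ℝ) (hx : 0 < x) (hx2 : x ≤ 2) :
    ∫ t in Ioc 0 x, Real.log t = x * Real.log x - x := by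
  have h := intervalIntegral.integral_eq_sub_of_hasDeriv_right_of_le hx.le
    (f := fun t => t * Real.log t - t) (f' := Real.log)
    (by exact (Real.continuous_mul_log.sub continuous_id).continuousOn)
    (fun t ht => by
      have := (Real.hasDerivAt_mul_log (ne_of_gt ht.1)).sub (hasDerivAt_id t)
      have h' : HasDerivAt (fun t => t * Real.log t - t) (Real.log t + 1 - 1) t := this
      simpa using h'.hasDerivWithinAt)
    (by
      rw [intervalIntegrable_iff_integrableOn_Ioc_of_le hx.le]
      exact log_integrableOn x hx hx2)
  rw [intervalIntegral.integral_of_le hx.le] at h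
  simp only [Real.log_zero] at h
  rw [h]; ring

noncomputable def E1 (x : ℝ) : ℝ := ∫ t in Ioi x, Real.exp (-t) / t

lemma intOn_exp_div (x : ℝ) (hx : 0 < x) :
    IntegrableOn (fun t => Real.exp (-t) / t) (Ioi x) := by
  have hexp : IntegrableOn (fun t => Real.exp (-(1:ℝ) * t)) (Ioi x) :=
    exp_neg_integrableOn_Ioi x one_pos
  refine Integrable.mono (hexp.const_mul x⁻¹) ?_ ?_
  · exact ((Real.measurable_exp.comp measurable_neg).div measurable_id).aestronglyMeasurable.restrict
  · filter_upwards [ae_restrict_mem measurableSet_Ioi] with t ht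
    rw [Real.norm_eq_abs, Real.norm_eq_abs]
    have ht0 : 0 < t := hx.trans ht
    rw [abs_of_nonneg (by positivity), abs_of_nonneg (by positivity : (0:ℝ) ≤ x⁻¹ * Real.exp (-(1:ℝ)*t))]
    rw [div_eq_mul_inv, neg_one_mul, mul_comm (x⁻¹)]
    have hinv : t⁻¹ ≤ x⁻¹ := inv_anti₀ hx (le_of_lt ht)
    exact mul_le_mul_of_nonneg_left hinv (Real.exp_pos _).le

lemma intOn_exp_log (x : ℝ) (hx : 0 ≤ x) :
    IntegrableOn (fun t => Real.exp (-t) * Real.log t) (Ioi x) := by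
  have h1 : IntegrableOn (fun t => Real.exp (-t) * Real.log t) (Ioc x 1) := by
    rcases le_or_gt 1 x with h | h
    · rw [Ioc_eq_empty (by simpa using h)]; simp [IntegrableOn]
    have hli : IntegrableOn Real.log (Ioc 0 1) := log_integrableOn 1 one_pos (by norm_num)
    have hli2 : IntegrableOn Real.log (Ioc x 1) := hli.mono_set (Ioc_subset_Ioc hx le_rfl)
    refine Integrable.mono hli2 ?_ ?_
    · exact ((Real.measurable_exp.comp measurable_neg).mul Real.measurable_log).aestronglyMeasurable.restrict
    · filter_upwards [ae_restrict_mem measurableSet_Ioc] with t ht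
      rw [Real.norm_eq_abs, Real.norm_eq_abs, abs_mul]
      calc |Real.exp (-t)| * |Real.log t| ≤ 1 * |Real.log t| := by
            gcongr
            rw [abs_of_nonneg (Real.exp_pos _).le]
            exact Real.exp_le_one_iff.mpr (by linarith [ht.1, hx])
      _ = |Real.log t| := by ring
  have h2 : IntegrableOn (fun t => Real.exp (-t) * Real.log t) (Ioi 1) := by
    have hexp : IntegrableOn (fun t => Real.exp (-(1/2:ℝ) * t)) (Ioi 1) :=
      exp_neg_integrableOn_Ioi 1 (by norm_num)
    refine Integrable.mono (hexp.const_mul 2) ?_ ?_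
    · exact ((Real.measurable_exp.comp measurable_neg).mul Real.measurable_log).aestronglyMeasurable.restrict
    · filter_upwards [ae_restrict_mem measurableSet_Ioi] with t ht
      have ht1 : (1:ℝ) < t := ht
      rw [Real.norm_eq_abs, Real.norm_eq_abs, abs_mul,
        abs_of_nonneg (Real.exp_pos _).le, abs_of_nonneg (Real.log_nonneg ht1.le),
        abs_of_nonneg (by positivity : (0:ℝ) ≤ 2 * Real.exp (-(1/2:ℝ)*t))]
      have hlog : Real.log t ≤ t := (Real.log_le_sub_one_of_pos (by linarith)).trans (by linarith)
      calc Real.exp (-t) * Real.log t ≤ Real.exp (-t) * t :=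
            mul_le_mul_of_nonneg_left hlog (Real.exp_pos _).le
      _ ≤ 2 * Real.exp (-(1/2:ℝ)*t) := by
            rw [show -t = (-(1/2:ℝ)*t) + (-(1/2:ℝ)*t) by ring, Real.exp_add]
            have key : t * Real.exp (-(1/2:ℝ)*t) ≤ 2 := by
              have h := Real.add_one_le_exp ((1/2:ℝ)*t)
              have he : Real.exp (-(1/2:ℝ)*t) = (Real.exp ((1/2:ℝ)*t))⁻¹ := by
                rw [← Real.exp_neg]; ring_nf
              rw [he]
              rw [mul_inv_le_iff₀ (Real.exp_pos _)]
              nlinarith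
            nlinarith [Real.exp_pos (-(1/2:ℝ)*t), Real.exp_pos (-t)]
  have := h1.union h2
  exact this.mono_set (Ioi_subset_Ioc_union_Ioi)

lemma E1_expand (x : ℝ) (hx : 0 < x) :
    E1 x = -(Real.exp (-x) * Real.log x) + ∫ t in Ioi x, Real.exp (-t) * Real.log t := by
  have hderiv : ∀ t ∈ Ici x, HasDerivAt (fun t => Real.exp (-t) * Real.log t)
      (Real.exp (-t) / t - Real.exp (-t) * Real.log t) t := by
    intro t ht
    have ht0 : 0 < t := lt_of_lt_of_le hx ht
    have h1 : HasDerivAt (fun t : ℝ => Real.exp (-t)) (-Real.exp (-t)) t := by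
      simpa using ((hasDerivAt_id t).neg.exp)
    have h2 : HasDerivAt Real.log t⁻¹ t := Real.hasDerivAt_log (ne_of_gt ht0)
    have : HasDerivAt (fun t => Real.exp (-t) * Real.log t) (-Real.exp (-t) * Real.log t + Real.exp (-t) * t⁻¹) t := h1.mul h2
    convert this using 1
    ring
  have htend : Tendsto (fun t => Real.exp (-t) * Real.log t) atTop (nhds 0) := by
    have h := Real.tendsto_pow_mul_exp_neg_atTop_nhds_zero 1
    simp only [pow_one] at h
    apply squeeze_zero_norm' ?_ h
    filter_upwards [eventually_ge_atTop (1:ℝ)] with t ht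
    rw [Real.norm_eq_abs, abs_mul, abs_of_nonneg (Real.exp_pos _).le,
      abs_of_nonneg (Real.log_nonneg ht)]
    have hlog : Real.log t ≤ t := (Real.log_le_sub_one_of_pos (by linarith)).trans (by linarith)
    calc Real.exp (-t) * Real.log t ≤ Real.exp (-t) * t :=
          mul_le_mul_of_nonneg_left hlog (Real.exp_pos _).le
    _ = t * Real.exp (-t) := by ring
  have hint : IntegrableOn (fun t => Real.exp (-t) / t - Real.exp (-t) * Real.log t) (Ioi x) :=
    (intOn_exp_div x hx).sub (intOn_exp_log x hx.le)
  have hftc := integral_Ioi_of_hasDerivAt_of_tendsto' hderiv hint htend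
  rw [integral_sub (intOn_exp_div x hx) (intOn_exp_log x hx.le)] at hftc
  have : E1 x = ∫ t in Ioi x, Real.exp (-t) / t := rfl
  rw [this]
  linarith [hftc]

lemma gamma_int' : ∫ t in Ioi (0:ℝ), Real.exp (-t) * Real.log t = -Real.eulerMascheroniConstant :=
  gamma_int

lemma split_int (x : ℝ) (hx : 0 < x) (hx2 : x ≤ 2) :
    ∫ t in Ioi x, Real.exp (-t) * Real.log t
      = -Real.eulerMascheroniConstant - ∫ t in Ioc 0 x, Real.exp (-t) * Real.log t := by
  have h1 : IntegrableOn (fun t => Real.exp (-t) * Real.log t) (Ioc 0 x) :=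
    (intOn_exp_log 0 le_rfl).mono_set Ioc_subset_Ioi_self
  have h2 : IntegrableOn (fun t => Real.exp (-t) * Real.log t) (Ioi x) :=
    intOn_exp_log x hx.le
  have hu := setIntegral_union (f := fun t => Real.exp (-t) * Real.log t)
    (μ := volume) Ioc_disjoint_Ioi_same measurableSet_Ioi h1 h2
  rw [Ioc_union_Ioi_eq_Ioi hx.le] at hu
  rw [gamma_int'] at hu
  linarith

lemma E1_nonneg (x : ℝ) (hx : 0 < x) : 0 ≤ E1 x := by
  apply setIntegral_nonneg measurableSet_Ioi
  intro t ht
  have : 0 < t := hx.trans ht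
  positivity

lemma E1_le (x : ℝ) (hx : 0 < x) : E1 x ≤ 1 + max 0 (Real.log (1/x)) := by
  rcases le_or_gt x 1 with h1 | h1
  · have hIoc : IntegrableOn (fun t => Real.exp (-t) / t) (Ioc x 1) :=
      (intOn_exp_div x hx).mono_set Ioc_subset_Ioi_self
    have hIoi : IntegrableOn (fun t => Real.exp (-t) / t) (Ioi 1) :=
      intOn_exp_div 1 one_pos
    have hsplit := setIntegral_union (f := fun t => Real.exp (-t) / t)
      (μ := volume) Ioc_disjoint_Ioi_same measurableSet_Ioi hIoc hIoi
    rw [Ioc_union_Ioi_eq_Ioi h1] at hsplit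
    have hb1 : ∫ t in Ioc x 1, Real.exp (-t) / t ≤ Real.log (1/x) := by
      have hinv : IntegrableOn (fun t : ℝ => t⁻¹) (Ioc x 1) := by
        rw [← intervalIntegrable_iff_integrableOn_Ioc_of_le h1]
        apply intervalIntegral.intervalIntegrable_inv
        · intro t ht
          rw [uIcc_of_le h1] at ht
          exact ne_of_gt (lt_of_lt_of_le hx ht.1)
        · exact continuousOn_id
      calc ∫ t in Ioc x 1, Real.exp (-t) / t ≤ ∫ t in Ioc x 1, t⁻¹ := by
            apply setIntegral_mono_on (hIoc) hinv measurableSet_Ioc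
            intro t ht
            have ht0 : 0 < t := hx.trans ht.1
            rw [div_eq_mul_inv]
            calc Real.exp (-t) * t⁻¹ ≤ 1 * t⁻¹ := by
                  apply mul_le_mul_of_nonneg_right _ (by positivity)
                  exact Real.exp_le_one_iff.mpr (by linarith)
            _ = t⁻¹ := one_mul _
      _ = Real.log (1/x) := by
            rw [← intervalIntegral.integral_of_le h1,
              integral_inv (by rw [uIcc_of_le h1]; intro hmem; exact absurd hmem.1 (by linarith))]
    have hb2 : ∫ t in Ioi (1:ℝ), Real.exp (-t) / t ≤ 1 := by
      calc ∫ t in Ioi (1:ℝ), Real.exp (-t) / t ≤ ∫ t in Ioi (1:ℝ), Real.exp (-t) := by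
            apply setIntegral_mono_on hIoi
              ((exp_neg_integrableOn_Ioi 1 one_pos).congr_fun (fun t _ => by simp [neg_one_mul]) measurableSet_Ioi)
              measurableSet_Ioi
            intro t ht
            have ht1 : (1:ℝ) < t := ht
            rw [div_le_iff₀ (by linarith)]
            calc Real.exp (-t) = Real.exp (-t) * 1 := (mul_one _).symm
            _ ≤ Real.exp (-t) * t := by
                  apply mul_le_mul_of_nonneg_left (by linarith) (Real.exp_pos _).le
      _ = Real.exp (-1) := integral_exp_neg_Ioi 1
      _ ≤ 1 := by rw [Real.exp_le_one_iff]; norm_num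
    have hE : E1 x = (∫ t in Ioc x 1, Real.exp (-t) / t) + ∫ t in Ioi (1:ℝ), Real.exp (-t) / t :=
      hsplit
    rw [hE]
    have hmax : Real.log (1/x) ≤ max 0 (Real.log (1/x)) := le_max_right _ _
    linarith
  · have hb : E1 x ≤ ∫ t in Ioi x, Real.exp (-t) := by
      apply setIntegral_mono_on (intOn_exp_div x hx)
        ((exp_neg_integrableOn_Ioi x one_pos).congr_fun (fun t _ => by simp [neg_one_mul]) measurableSet_Ioi)
        measurableSet_Ioi
      intro t ht
      have ht1 : (1:ℝ) < t := h1.trans ht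
      rw [div_le_iff₀ (by linarith)]
      calc Real.exp (-t) = Real.exp (-t) * 1 := (mul_one _).symm
      _ ≤ Real.exp (-t) * t := mul_le_mul_of_nonneg_left (by linarith) (Real.exp_pos _).le
    rw [integral_exp_neg_Ioi] at hb
    have : Real.exp (-x) ≤ 1 := by rw [Real.exp_le_one_iff]; linarith
    have hmax : (0:ℝ) ≤ max 0 (Real.log (1/x)) := le_max_left _ _
    linarith

lemma log_integrableOn' (x : ℝ) (hx : 0 < x) (hx2 : x ≤ 2) :
    IntegrableOn Real.log (Ioc 0 x) := log_integrableOn x hx hx2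

lemma integral_log_Ioc' (x : ℝ) (hx : 0 < x) (hx2 : x ≤ 2) :
    ∫ t in Ioc 0 x, Real.log t = x * Real.log x - x := integral_log_Ioc x hx hx2

lemma E1_err (x : ℝ) (hx : 0 < x) (hx2 : x ≤ 2) :
    |E1 x + Real.log x + Real.eulerMascheroniConstant|
      ≤ 4 * x * (1 + max 0 (Real.log (1/x))) := by
  set M := max 0 (Real.log (1/x)) with hM
  have hM0 : 0 ≤ M := le_max_left _ _
  have hexpand : E1 x + Real.log x + Real.eulerMascheroniConstant
      = (1 - Real.exp (-x)) * Real.log x - ∫ t in Ioc 0 x, Real.exp (-t) * Real.log t := by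
    rw [E1_expand x hx, split_int x hx hx2]
    ring
  rw [hexpand]
  have hlog2 : Real.log 2 ≤ 0.6931471808 := le_of_lt Real.log_two_lt_d9
  have hlog2' : 0 < Real.log 2 := Real.log_pos (by norm_num)
  have habslogx : |Real.log x| ≤ Real.log 2 + M := by
    rcases le_or_gt x 1 with h | h
    · rw [abs_of_nonpos (Real.log_nonpos hx.le h)]
      have : -Real.log x = Real.log (1/x) := by rw [one_div, Real.log_inv]
      rw [this]
      have : Real.log (1/x) ≤ M := le_max_right _ _
      linarith
    · rw [abs_of_nonneg (Real.log_nonneg h.le)]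
      have : Real.log x ≤ Real.log 2 := Real.log_le_log (by linarith) hx2
      linarith
  have hexp1 : 0 ≤ 1 - Real.exp (-x) := by
    have : Real.exp (-x) ≤ 1 := Real.exp_le_one_iff.mpr (by linarith)
    linarith
  have hexp2 : 1 - Real.exp (-x) ≤ x := by
    have := Real.add_one_le_exp (-x)
    linarith
  have hT1 : |(1 - Real.exp (-x)) * Real.log x| ≤ x * (Real.log 2 + M) := by
    rw [abs_mul, abs_of_nonneg hexp1]
    apply mul_le_mul hexp2 habslogx (abs_nonneg _) hx.le
  have hT2 : |∫ t in Ioc 0 x, Real.exp (-t) * Real.log t|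
      ≤ x * (1 + M + 2 * Real.log 2) := by
    have hbound : IntegrableOn (fun t : ℝ => -Real.log t + 2 * Real.log 2) (Ioc 0 x) := by
      exact (log_integrableOn' x hx hx2).neg.add (integrableOn_const (by
        rw [Real.volume_Ioc]; exact ENNReal.ofReal_ne_top))
    have hle : |∫ t in Ioc 0 x, Real.exp (-t) * Real.log t|
        ≤ ∫ t in Ioc 0 x, (-Real.log t + 2 * Real.log 2) := by
      rw [← Real.norm_eq_abs]
      refine norm_integral_le_of_norm_le hbound ?_
      filter_upwards [ae_restrict_mem measurableSet_Ioc] with t ht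
      have ht0 : 0 < t := ht.1
      have ht2 : t ≤ 2 := ht.2.trans hx2
      rw [Real.norm_eq_abs, abs_mul, abs_of_nonneg (Real.exp_pos _).le]
      have h1 : Real.exp (-t) * |Real.log t| ≤ |Real.log t| := by
        have : Real.exp (-t) ≤ 1 := Real.exp_le_one_iff.mpr (by linarith)
        nlinarith [abs_nonneg (Real.log t)]
      have h2 : |Real.log t| ≤ -Real.log t + 2 * Real.log 2 := by
        rcases le_or_gt t 1 with h | h
        · rw [abs_of_nonpos (Real.log_nonpos ht0.le h)]
          linarith
        · rw [abs_of_nonneg (Real.log_nonneg h.le)]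
          have : Real.log t ≤ Real.log 2 := Real.log_le_log ht0 ht2
          linarith
      linarith
    · refine hle.trans ?_
      have hlint : IntegrableOn (fun t : ℝ => -Real.log t) (Ioc 0 x) :=
        (log_integrableOn' x hx hx2).neg
      have hcint : IntegrableOn (fun _ : ℝ => 2 * Real.log 2) (Ioc 0 x) :=
        integrableOn_const (by rw [Real.volume_Ioc]; exact ENNReal.ofReal_ne_top)
      rw [integral_add hlint hcint]
      have hneg : ∫ t in Ioc 0 x, -Real.log t = -∫ t in Ioc 0 x, Real.log t := integral_neg _
      rw [hneg, integral_log_Ioc' x hx hx2, setIntegral_const]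
      rw [Real.volume_real_Ioc_of_le hx.le]
      have hxlogx : -(x * Real.log x) ≤ x * M := by
        rcases le_or_gt x 1 with h | h
        · have : -Real.log x = Real.log (1/x) := by rw [one_div, Real.log_inv]
          have h2 : Real.log (1/x) ≤ M := le_max_right _ _
          nlinarith
        · have : 0 ≤ Real.log x := Real.log_nonneg h.le
          nlinarith
      have : (x - 0) • (2 * Real.log 2) = x * (2 * Real.log 2) := by
        rw [smul_eq_mul]; ring
      rw [this]
      nlinarith
  calc |(1 - Real.exp (-x)) * Real.log x - ∫ t in Ioc 0 x, Real.exp (-t) * Real.log t|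
      ≤ |(1 - Real.exp (-x)) * Real.log x| + |∫ t in Ioc 0 x, Real.exp (-t) * Real.log t| :=
        abs_sub _ _
  _ ≤ x * (Real.log 2 + M) + x * (1 + M + 2 * Real.log 2) := add_le_add hT1 hT2
  _ ≤ 4 * x * (1 + M) := by nlinarith
  _ = 4 * x * (1 + max 0 (Real.log (1/x))) := rfl


lemma sq_image : (fun x : ℝ => x ^ 2) '' (Ioi 0) = Ioi 0 := by
  ext u
  constructor
  · rintro ⟨x, hx, rfl⟩
    exact pow_pos (mem_Ioi.mp hx) 2
  · intro hu
    exact ⟨Real.sqrt u, Real.sqrt_pos.mpr hu, Real.sq_sqrt (le_of_lt hu)⟩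

lemma affine_image (c d : ℝ) (hc : 0 < c) :
    (fun x : ℝ => c * x + d) '' (Ioi 0) = Ioi d := by
  ext u
  constructor
  · rintro ⟨x, hx, rfl⟩
    have : (0:ℝ) < c * x := mul_pos hc hx
    simpa using by linarith [this]
  · intro hu
    refine ⟨(u - d) / c, ?_, ?_⟩
    · exact div_pos (by simpa using sub_pos.mpr (mem_Ioi.mp hu)) hc
    · field_simp; ring

lemma Cdelta_eq (μ δ : ℝ) (hμ : 0 < μ) (hδ : 0 < δ) :
    Cdelta μ δ = Real.exp (2*μ*δ^2) * E1 (2*μ*δ^2) / (8*Real.pi^2) := by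
  have hπ : 0 < Real.pi := Real.pi_pos
  set a : ℝ := 8 * Real.pi ^ 2 * δ ^ 2 with ha
  set b : ℝ := 4 * Real.pi ^ 2 with hb
  have ha0 : 0 < a := by positivity
  have hb0 : 0 < b := by positivity
  set x : ℝ := 2*μ*δ^2 with hxdef
  have hx0 : 0 < x := by positivity
  -- step 1: reduce to Ioi 0
  have step1 : Cdelta μ δ
      = 2 * ∫ r in Ioi (0:ℝ), r * Real.exp (-a * r ^ 2) / (2 * (b * r ^ 2 + μ)) := by
    rw [Cdelta]
    rw [show (fun η : ℝ => |η| * Real.exp (-8 * Real.pi ^ 2 * δ ^ 2 * η ^ 2) /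
        (2 * (4 * Real.pi ^ 2 * η ^ 2 + μ)))
      = fun η : ℝ => (fun r => r * Real.exp (-a * r ^ 2) / (2 * (b * r ^ 2 + μ))) |η| from
        funext fun η => by
          simp only [sq_abs]
          rw [show -a * η ^ 2 = -8 * Real.pi ^ 2 * δ ^ 2 * η ^ 2 by rw [ha]; ring,
            show b = 4 * Real.pi ^ 2 from hb]]
    exact integral_comp_abs (f := fun r => r * Real.exp (-a * r ^ 2) / (2 * (b * r ^ 2 + μ)))
  -- step 2: substitute u = r^2
  have step2 : ∫ u in Ioi (0:ℝ), Real.exp (-a * u) / (4 * (b * u + μ))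
      = ∫ r in Ioi (0:ℝ), r * Real.exp (-a * r ^ 2) / (2 * (b * r ^ 2 + μ)) := by
    have h := integral_image_eq_integral_abs_deriv_smul measurableSet_Ioi
      (f := fun r : ℝ => r ^ 2) (f' := fun r : ℝ => 2 * r)
      (fun r hr => (hasDerivAt_pow 2 r).hasDerivWithinAt.congr_deriv (by
        norm_num))
      (fun r hr s hs hrs => by
        have hr0 : 0 < r := hr
        have hs0 : 0 < s := hs
        have hrs' : r ^ 2 = s ^ 2 := hrs
        rw [← Real.sqrt_sq hr0.le, ← Real.sqrt_sq hs0.le, hrs'])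
      (fun u => Real.exp (-a * u) / (4 * (b * u + μ)))
    rw [sq_image] at h
    rw [h]
    apply setIntegral_congr_fun measurableSet_Ioi
    intro r hr
    have hr0 : 0 < r := hr
    simp only [smul_eq_mul]
    rw [abs_of_nonneg (by linarith : (0:ℝ) ≤ 2 * r)]
    have h1 : 0 < b * r ^ 2 + μ := by positivity
    field_simp
    ring
  -- step 3: substitute t = 2δ²(b y + μ)
  have step3 : E1 x = b * Real.exp (-x) * ∫ y in Ioi (0:ℝ), Real.exp (-a * y) / (b * y + μ) := by
    have h := integral_image_eq_integral_abs_deriv_smul (s := Ioi (0:ℝ)) measurableSet_Ioi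
      (f := fun y : ℝ => (2*δ^2*b) * y + 2*δ^2*μ) (f' := fun _ : ℝ => 2*δ^2*b)
      (fun y hy => ((hasDerivAt_id y).const_mul (2*δ^2*b)).add_const (2*δ^2*μ)
        |>.hasDerivWithinAt.congr_deriv (by simp [mul_one]))
      (fun y hy z hz hyz => by
        have hc : (0:ℝ) < 2*δ^2*b := by positivity
        have hyz' : 2*δ^2*b*y + 2*δ^2*μ = 2*δ^2*b*z + 2*δ^2*μ := hyz
        have h2 : (2*δ^2*b) * y = (2*δ^2*b) * z := by linarith
        exact mul_left_cancel₀ (ne_of_gt hc) h2)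
      (fun t => Real.exp (-t) / t)
    rw [affine_image _ _ (by positivity)] at h
    have hxeq : 2*δ^2*μ = x := by rw [hxdef]; ring
    rw [hxeq] at h
    rw [E1, h]
    rw [← integral_const_mul]
    apply setIntegral_congr_fun measurableSet_Ioi
    intro y hy
    have hy0 : 0 < y := hy
    simp only [smul_eq_mul]
    rw [abs_of_nonneg (by positivity : (0:ℝ) ≤ 2*δ^2*b)]
    rw [show -((2*δ^2*b) * y + x) = -x + (-a * y) by rw [hxdef, ha, hb]; ring, Real.exp_add]
    have hden : (2*δ^2*b) * y + x = 2*δ^2 * (b * y + μ) := by rw [hxdef]; ring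
    rw [hden]
    have hbyμ : 0 < b * y + μ := by positivity
    field_simp
  -- combine
  have step4 : ∫ u in Ioi (0:ℝ), Real.exp (-a * u) / (4 * (b * u + μ))
      = (1/4) * ∫ y in Ioi (0:ℝ), Real.exp (-a * y) / (b * y + μ) := by
    rw [← integral_const_mul]
    apply setIntegral_congr_fun measurableSet_Ioi
    intro y hy
    have hy0 : 0 < y := hy
    have hpos : 0 < b * y + μ := by nlinarith [mul_pos hb0 hy0]
    field_simp
  have hE : ∫ y in Ioi (0:ℝ), Real.exp (-a * y) / (b * y + μ)
      = Real.exp x * E1 x / b := by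
    rw [step3, Real.exp_neg]
    have hex : Real.exp x ≠ 0 := ne_of_gt (Real.exp_pos _)
    field_simp
    congr 1; ext y; ring
  rw [step1, ← step2, step4, hE]
  rw [hb]
  have : Real.exp x * E1 x / (8 * Real.pi^2)
      = 2 * ((1/4) * (Real.exp x * E1 x / (4*Real.pi^2))) := by
    field_simp
    ring
  rw [hxdef] at this ⊢
  rw [this]

end Aux

set_option maxHeartbeats 1000000 in
/-- Logarithmic divergence of `C^{(δ)}` as `δ → 0`:
`C^{(δ)} = log(1/δ)/(4π²) + α − log μ/(8π²) + O(μδ²(1+log(1/(μδ²))))`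
with `α = −(γ_EM + log 2)/(8π²)`. -/
theorem stmt_6 :
    ∃ C > (0:ℝ), ∀ μ : ℝ, 0 < μ → ∀ δ : ℝ, δ ∈ Set.Ioc (0:ℝ) (1/2) → μ * δ ^ 2 ≤ 1 →
      |Cdelta μ δ - Real.log (1 / δ) / (4 * Real.pi ^ 2)
          - (-(Real.eulerMascheroniConstant + Real.log 2) / (8 * Real.pi ^ 2))
          + Real.log μ / (8 * Real.pi ^ 2)|
        ≤ C * (μ * δ ^ 2) * (1 + Real.log (1 / (μ * δ ^ 2))) := by
  refine ⟨3, by norm_num, ?_⟩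
  intro μ hμ δ hδ hμδ
  obtain ⟨hδ0, hδhalf⟩ := hδ
  have hπ : 0 < Real.pi := Real.pi_pos
  have hπ1 : 1 ≤ Real.pi ^ 2 := by nlinarith [Real.pi_gt_three]
  set x : ℝ := 2 * μ * δ ^ 2 with hxdef
  have hx0 : 0 < x := by positivity
  have hx2 : x ≤ 2 := by nlinarith
  have hC : Cdelta μ δ = Real.exp x * E1 x / (8 * Real.pi ^ 2) := Cdelta_eq μ δ hμ hδ0
  have hlogx : Real.log x = Real.log 2 + Real.log μ + 2 * Real.log δ := by
    rw [hxdef, Real.log_mul (by positivity) (by positivity),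
      Real.log_mul (by norm_num) (ne_of_gt hμ), Real.log_pow]
    push_cast; ring
  have hlog1δ : Real.log (1 / δ) = -Real.log δ := by rw [one_div, Real.log_inv]
  have key : Cdelta μ δ - Real.log (1 / δ) / (4 * Real.pi ^ 2)
        - (-(Real.eulerMascheroniConstant + Real.log 2) / (8 * Real.pi ^ 2))
        + Real.log μ / (8 * Real.pi ^ 2)
      = ((E1 x + Real.log x + Real.eulerMascheroniConstant)
          + (Real.exp x - 1) * E1 x) / (8 * Real.pi ^ 2) := by
    rw [hC, hlogx, hlog1δ]
    field_simp
    ring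
  rw [key]
  set M : ℝ := max 0 (Real.log (1/x)) with hMdef
  have hM0 : 0 ≤ M := le_max_left _ _
  set L : ℝ := Real.log (1 / (μ * δ ^ 2)) with hLdef
  have hL0 : 0 ≤ L := Real.log_nonneg (by
    rw [le_div_iff₀ (by positivity)]; nlinarith)
  have hML : M ≤ L := by
    have h1 : Real.log (1/x) ≤ L := by
      apply Real.log_le_log (by positivity)
      rw [div_le_div_iff₀ (by positivity) (by positivity)]
      nlinarith
    exact max_le hL0 h1
  have herr := E1_err x hx0 hx2
  have hE1le := E1_le x hx0
  have hE1pos := E1_nonneg x hx0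
  have hexp8 : Real.exp x - 1 ≤ 8 * x := by
    have h1 : Real.exp x ≤ Real.exp 2 := Real.exp_le_exp.mpr hx2
    have h2 : Real.exp 2 < 8 := by
      have := Real.exp_one_lt_d9
      rw [show (2:ℝ) = 1 + 1 by norm_num, Real.exp_add]
      nlinarith [Real.exp_pos 1]
    have h3 : 1 - Real.exp (-x) ≤ x := by
      have := Real.add_one_le_exp (-x)
      linarith
    have h4 : Real.exp x - 1 ≤ x * Real.exp x := by
      have he : Real.exp x * Real.exp (-x) = 1 := by rw [← Real.exp_add]; simp
      nlinarith [Real.exp_pos x]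
    nlinarith [Real.exp_pos x]
  have hexp0 : 0 ≤ Real.exp x - 1 := by
    have := Real.add_one_le_exp x
    linarith
  have hB : (Real.exp x - 1) * E1 x ≤ 8 * x * (1 + M) := by
    calc (Real.exp x - 1) * E1 x ≤ (8 * x) * (1 + M) := by
          apply mul_le_mul hexp8 hE1le hE1pos (by positivity)
    _ = 8 * x * (1 + M) := by ring
  have hBpos : 0 ≤ (Real.exp x - 1) * E1 x := mul_nonneg hexp0 hE1pos
  have habs : |(E1 x + Real.log x + Real.eulerMascheroniConstant)
        + (Real.exp x - 1) * E1 x| ≤ 12 * x * (1 + M) := by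
    calc |(E1 x + Real.log x + Real.eulerMascheroniConstant) + (Real.exp x - 1) * E1 x|
        ≤ |E1 x + Real.log x + Real.eulerMascheroniConstant| + |(Real.exp x - 1) * E1 x| :=
          abs_add_le _ _
    _ ≤ 4 * x * (1 + M) + 8 * x * (1 + M) := by
          refine add_le_add herr ?_
          rw [abs_of_nonneg hBpos]
          exact hB
    _ = 12 * x * (1 + M) := by ring
  rw [abs_div, abs_of_nonneg (by positivity : (0:ℝ) ≤ 8 * Real.pi ^ 2)]
  rw [div_le_iff₀ (by positivity)]
  calc |(E1 x + Real.log x + Real.eulerMascheroniConstant) + (Real.exp x - 1) * E1 x|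
      ≤ 12 * x * (1 + M) := habs
  _ ≤ 12 * x * (1 + L) := by
        apply mul_le_mul_of_nonneg_left (by linarith) (by positivity)
  _ = 24 * (μ * δ ^ 2) * (1 + L) := by rw [hxdef]; ring
  _ ≤ 3 * (μ * δ ^ 2) * (1 + L) * (8 * Real.pi ^ 2) := by
        have hm : (0:ℝ) ≤ 24 * (μ * δ ^ 2) * (1 + L) := by positivity
        nlinarith [mul_le_mul_of_nonneg_left hπ1 hm]
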